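/- Any real-valued Gaussian random variable with mean zero and variance σ² ≤ 1 has the same distribution as the average (X+Y)/2 of two (not necessarily independent) standard Gaussian random variables X, Y. -/

import Mathlib

open MeasureTheory ProbabilityTheory
open scoped ENNReal NNReal

noncomputable section GaussAux

namespace GaussAux

open Real

/-- Rotation-like linear map on `ℝ × ℝ`. -/
def rot (a b : ℝ) : (ℝ × ℝ) →ₗ[ℝ] (ℝ × ℝ) :=
  Matrix.toLin (Module.Basis.finTwoProd ℝ) (Module.Basis.finTwoProd ℝ) !![a, b; -b, a]

lemma rot_apply (a b : ℝ) (p : ℝ × ℝ) :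
    rot a b p = (a * p.1 + b * p.2, -b * p.1 + a * p.2) := by
  simp [rot, Matrix.toLin_finTwoProd_apply]

lemma rot_det (a b : ℝ) : LinearMap.det (rot a b) = a ^ 2 + b ^ 2 := by
  rw [rot, ← LinearMap.det_toMatrix (Module.Basis.finTwoProd ℝ), LinearMap.toMatrix_toLin,
    Matrix.det_fin_two_of]
  ring

lemma map_rot_volume {a b : ℝ} (hab : a ^ 2 + b ^ 2 = 1) :
    Measure.map (rot a b) (volume : Measure (ℝ × ℝ)) = volume := by
  have hdet : LinearMap.det (rot a b) ≠ 0 := by rw [rot_det, hab]; norm_num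
  rw [Measure.map_linearMap_addHaar_eq_smul_addHaar _ hdet, rot_det, hab]
  simp

/-- Pushing forward a `withDensity` measure. -/
lemma map_withDensity_comp {α β : Type*} [MeasurableSpace α] [MeasurableSpace β]
    (μ : Measure α) {T : α → β} (hT : Measurable T) {f : β → ℝ≥0∞} (hf : Measurable f) :
    (μ.withDensity (fun x => f (T x))).map T = (μ.map T).withDensity f := by
  ext s hs
  rw [Measure.map_apply hT hs, withDensity_apply _ (hT hs), withDensity_apply _ hs,
    setLIntegral_map hs hf hT]

/-- The product of two standard Gaussians as a measure with density. -/
lemma gaussian_prod_eq :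
    (gaussianReal 0 1).prod (gaussianReal 0 1)
      = (volume : Measure (ℝ × ℝ)).withDensity
          (fun p => gaussianPDF 0 1 p.1 * gaussianPDF 0 1 p.2) := by
  refine Measure.prod_eq fun s t hs ht => ?_
  rw [withDensity_apply _ (hs.prod ht), Measure.volume_eq_prod, ← Measure.prod_restrict,
    lintegral_prod_mul (measurable_gaussianPDF 0 1).aemeasurable
      (measurable_gaussianPDF 0 1).aemeasurable,
    ← withDensity_apply _ hs, ← withDensity_apply _ ht,
    ← gaussianReal_of_var_ne_zero 0 one_ne_zero]

lemma gaussianPDF_prod_rot {a b : ℝ} (hab : a ^ 2 + b ^ 2 = 1) (p : ℝ × ℝ) :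
    gaussianPDF 0 1 (rot a b p).1 * gaussianPDF 0 1 (rot a b p).2
      = gaussianPDF 0 1 p.1 * gaussianPDF 0 1 p.2 := by
  have key : ∀ x y : ℝ, gaussianPDFReal 0 1 x * gaussianPDFReal 0 1 y
      = ((Real.sqrt (2 * π * 1))⁻¹)^2 * Real.exp (-(x^2 + y^2) / 2) := by
    intro x y
    simp only [gaussianPDFReal, NNReal.coe_one, sub_zero, mul_one]
    rw [show (-(x^2+y^2)/2 : ℝ) = -x^2/2 + -y^2/2 by ring, Real.exp_add]
    ring
  have hsum : (rot a b p).1 ^ 2 + (rot a b p).2 ^ 2 = p.1 ^ 2 + p.2 ^ 2 := by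
    rw [rot_apply]
    simp only
    nlinarith [hab]
  simp only [gaussianPDF]
  rw [← ENNReal.ofReal_mul (gaussianPDFReal_nonneg 0 1 _),
    ← ENNReal.ofReal_mul (gaussianPDFReal_nonneg 0 1 _), key, key, hsum]

lemma map_rot_gaussian_prod {a b : ℝ} (hab : a ^ 2 + b ^ 2 = 1) :
    Measure.map (rot a b) ((gaussianReal 0 1).prod (gaussianReal 0 1))
      = (gaussianReal 0 1).prod (gaussianReal 0 1) := by
  have hTmeas : Measurable (rot a b) := (rot a b).continuous_of_finiteDimensional.measurable
  have hfmeas : Measurable (fun p : ℝ × ℝ => gaussianPDF 0 1 p.1 * gaussianPDF 0 1 p.2) :=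
    ((measurable_gaussianPDF 0 1).comp measurable_fst).mul
      ((measurable_gaussianPDF 0 1).comp measurable_snd)
  rw [gaussian_prod_eq]
  have : (volume : Measure (ℝ × ℝ)).withDensity
      (fun p => gaussianPDF 0 1 p.1 * gaussianPDF 0 1 p.2)
      = (volume : Measure (ℝ × ℝ)).withDensity
        (fun p => gaussianPDF 0 1 (rot a b p).1 * gaussianPDF 0 1 (rot a b p).2) := by
    congr 1
    ext p
    exact (gaussianPDF_prod_rot hab p).symm
  rw [this]
  rw [map_withDensity_comp _ hTmeas hfmeas, map_rot_volume hab]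
  exact this

end GaussAux

end GaussAux

/-- Any real-valued Gaussian random variable with mean zero and variance `σ² ≤ 1` has the same
distribution as the average `(X+Y)/2` of two (not necessarily independent) standard Gaussian
random variables. -/
theorem gaussian_variance_le_one_eq_average_of_two_std_gaussians (σ2 : NNReal) (h : σ2 ≤ 1) :
    ∃ (Ω : Type) (_ : MeasurableSpace Ω) (μ : Measure Ω) (_ : IsProbabilityMeasure μ)
      (X Y : Ω → ℝ), Measurable X ∧ Measurable Y ∧
      μ.map X = gaussianReal 0 1 ∧ μ.map Y = gaussianReal 0 1 ∧
      μ.map (fun ω => (X ω + Y ω) / 2) = gaussianReal 0 σ2 := by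
  classical
  set a : ℝ := Real.sqrt σ2 with ha_def
  set b : ℝ := Real.sqrt (1 - σ2) with hb_def
  have hσ2 : (σ2 : ℝ) ≤ 1 := by exact_mod_cast h
  have ha2 : a ^ 2 = (σ2 : ℝ) := Real.sq_sqrt σ2.coe_nonneg
  have hb2 : b ^ 2 = 1 - (σ2 : ℝ) := Real.sq_sqrt (by linarith)
  have hab : a ^ 2 + b ^ 2 = 1 := by rw [ha2, hb2]; ring
  have hab' : a ^ 2 + (-b) ^ 2 = 1 := by rw [neg_pow]; simpa using hab
  set P : Measure ℝ := gaussianReal 0 1 with hP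
  refine ⟨ℝ × ℝ, inferInstance, P.prod P, inferInstance,
    fun ω => a * ω.1 + b * ω.2, fun ω => a * ω.1 + -b * ω.2, ?_, ?_, ?_, ?_, ?_⟩
  · exact (measurable_fst.const_mul a).add (measurable_snd.const_mul b)
  · exact (measurable_fst.const_mul a).add (measurable_snd.const_mul (-b))
  · -- X = fst ∘ rot a b
    have : (fun ω : ℝ × ℝ => a * ω.1 + b * ω.2)
        = Prod.fst ∘ (GaussAux.rot a b) := by
      ext ω; simp [GaussAux.rot_apply]
    rw [this, ← Measure.map_map measurable_fst
        (GaussAux.rot a b).continuous_of_finiteDimensional.measurable,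
      GaussAux.map_rot_gaussian_prod hab, Measure.map_fst_prod]
    simp
    exact hP.symm
  · have : (fun ω : ℝ × ℝ => a * ω.1 + -b * ω.2)
        = Prod.fst ∘ (GaussAux.rot a (-b)) := by
      ext ω; simp [GaussAux.rot_apply]
    rw [this, ← Measure.map_map measurable_fst
        (GaussAux.rot a (-b)).continuous_of_finiteDimensional.measurable,
      GaussAux.map_rot_gaussian_prod hab', Measure.map_fst_prod]
    simp
    exact hP.symm
  · have heq : (fun ω : ℝ × ℝ => ((a * ω.1 + b * ω.2) + (a * ω.1 + -b * ω.2)) / 2)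
        = (fun x : ℝ => a * x) ∘ Prod.fst := by
      ext ω; simp only [Function.comp_apply]; ring
    rw [heq, ← Measure.map_map (measurable_const_mul a) measurable_fst,
      Measure.map_fst_prod]
    have : P.map (fun x : ℝ => a * x) = gaussianReal (a * 0) (⟨a^2, sq_nonneg _⟩ * 1) :=
      gaussianReal_map_const_mul a
    simp only [measure_univ, one_smul]
    rw [this]
    congr 1
    · ring
    · refine (mul_one _).trans ?_
      ext
      simp [ha2]
      rfl
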